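/- arXiv:2507.00221 — 2 statements merged into one kernel-verified Lean document; each statement's English description precedes it below -/
import Mathlib

section
/- Let X be a profinite space. Then the abelian group M(B) of motives of its Boolean algebra B of clopen subsets is a free abelian group. -/
open scoped Classical





/-- The subgroup of relators defining the module of motives of a lower bounded
distributive lattice `D`: generated by `[⊥]` and the modularity relators
`[U] + [V] - [U ⊔ V] - [U ⊓ V]`. -/
def motiveRelators (D : Type*) [DistribLattice D] [OrderBot D] :
    AddSubgroup (FreeAbelianGroup D) :=
  AddSubgroup.closure
    ({FreeAbelianGroup.of (⊥ : D)} ∪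
      {x | ∃ U V : D, x = FreeAbelianGroup.of U + FreeAbelianGroup.of V
          - FreeAbelianGroup.of (U ⊔ V) - FreeAbelianGroup.of (U ⊓ V)})

/-- The module of motives `M(D)` of a lower bounded distributive lattice `D`: the
free abelian group on `D` modulo `[⊥] = 0` and `[U] + [V] = [U ⊔ V] + [U ⊓ V]`. -/
def Motive (D : Type*) [DistribLattice D] [OrderBot D] : Type _ :=
  FreeAbelianGroup D ⧸ motiveRelators D

noncomputable instance (D : Type*) [DistribLattice D] [OrderBot D] :
    AddCommGroup (Motive D) :=
  QuotientAddGroup.Quotient.addCommGroup (motiveRelators D)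

/-- The universal valuation `D → M(D)`, `U ↦ [U]`. -/
def motiveOf {D : Type*} [DistribLattice D] [OrderBot D] (U : D) : Motive D :=
  QuotientAddGroup.mk (FreeAbelianGroup.of U)

/-- A valuation on a lower bounded distributive lattice with values in an abelian
group: `μ ⊥ = 0` and modularity `μ U + μ V = μ (U ⊔ V) + μ (U ⊓ V)`. -/
def IsValuation {D A : Type*} [DistribLattice D] [OrderBot D] [AddCommGroup A]
    (μ : D → A) : Prop :=
  μ ⊥ = 0 ∧ ∀ U V : D, μ U + μ V = μ (U ⊔ V) + μ (U ⊓ V)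


-- scratch for auxiliary lemma development
section Val
variable {D A : Type*} [DistribLattice D] [OrderBot D] [AddCommGroup A]

def IsValuation' (μ : D → A) : Prop :=
  μ ⊥ = 0 ∧ ∀ U V : D, μ U + μ V = μ (U ⊔ V) + μ (U ⊓ V)

theorem IsValuation'.sup_of_disjoint {μ : D → A} (hμ : IsValuation' μ) {U V : D}
    (h : U ⊓ V = ⊥) : μ (U ⊔ V) = μ U + μ V := by
  have := hμ.2 U V
  rw [h, hμ.1, add_zero] at this
  exact this.symm

theorem IsValuation'.finset_sup {μ : D → A} (hμ : IsValuation' μ) {ι : Type*}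
    (s : Finset ι) (f : ι → D)
    (hdisj : ∀ i ∈ s, ∀ j ∈ s, i ≠ j → f i ⊓ f j = ⊥) :
    μ (s.sup f) = ∑ i ∈ s, μ (f i) := by
  induction s using Finset.cons_induction with
  | empty => simpa using hμ.1
  | cons a s ha ih =>
    rw [Finset.sup_cons, Finset.sum_cons]
    have hd : f a ⊓ s.sup f = ⊥ := by
      rw [Finset.sup_inf_distrib_left]
      rw [Finset.sup_eq_bot_iff]
      intro i hi
      exact hdisj a (Finset.mem_cons_self a s) i (Finset.mem_cons_of_mem hi)
        (fun h => ha (h ▸ hi))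
    rw [hμ.sup_of_disjoint hd, ih (fun i hi j hj hij =>
      hdisj i (Finset.mem_cons_of_mem hi) j (Finset.mem_cons_of_mem hj) hij)]
end Val

section Clopens
open TopologicalSpace
variable {X : Type*} [TopologicalSpace X]

lemma Clopens.mem_sup' {U V : Clopens X} {x : X} : x ∈ U ⊔ V ↔ x ∈ U ∨ x ∈ V := Iff.rfl
lemma Clopens.mem_inf' {U V : Clopens X} {x : X} : x ∈ U ⊓ V ↔ x ∈ U ∧ x ∈ V := Iff.rfl
lemma Clopens.mem_compl' {U : Clopens X} {x : X} : x ∈ Uᶜ ↔ x ∉ U := Iff.rfl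
lemma Clopens.not_mem_bot' {x : X} : x ∉ (⊥ : Clopens X) := id

lemma Clopens.mem_finset_sup {ι : Type*} {s : Finset ι} {f : ι → Clopens X} {x : X} :
    x ∈ s.sup f ↔ ∃ i ∈ s, x ∈ f i := by
  induction s using Finset.cons_induction with
  | empty => simp [Clopens.not_mem_bot']
  | cons a s ha ih => simp [Finset.sup_cons, Clopens.mem_sup', ih]

lemma Clopens.mem_finset_inf {ι : Type*} {s : Finset ι} {f : ι → Clopens X} {x : X} :
    x ∈ s.inf f ↔ ∀ i ∈ s, x ∈ f i := by
  induction s using Finset.cons_induction with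
  | empty => simp [show x ∈ (⊤ : Clopens X) from trivial]
  | cons a s ha ih => simp [Finset.inf_cons, Clopens.mem_inf', ih]

/-- The atom of the finite Boolean subalgebra generated by `s` given by the
pattern `T ⊆ s`. -/
noncomputable def clopenAtom (s T : Finset (Clopens X)) : Clopens X :=
  T.inf id ⊓ (s \ T).inf compl

lemma mem_clopenAtom {s T : Finset (Clopens X)} (hT : T ⊆ s) {x : X} :
    x ∈ clopenAtom s T ↔ ∀ U ∈ s, (x ∈ U ↔ U ∈ T) := by
  simp only [clopenAtom, Clopens.mem_inf', Clopens.mem_finset_inf, Finset.mem_sdiff, id,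
    Clopens.mem_compl']
  constructor
  · rintro ⟨h1, h2⟩ U hU
    exact ⟨fun hx => by_contra fun hUT => h2 U ⟨hU, hUT⟩ hx, fun hUT => h1 U hUT⟩
  · intro h
    exact ⟨fun U hU => (h U (hT hU)).2 hU, fun U hU hx => hU.2 ((h U hU.1).1 hx)⟩

lemma clopenAtom_disjoint {s T T' : Finset (Clopens X)} (hT : T ⊆ s) (hT' : T' ⊆ s)
    (hne : T ≠ T') : clopenAtom s T ⊓ clopenAtom s T' = ⊥ := by
  ext x
  simp only [Clopens.mem_inf', Clopens.coe_bot, Set.mem_empty_iff_false, iff_false,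
    SetLike.mem_coe]
  rintro ⟨h1, h2⟩
  rw [mem_clopenAtom hT] at h1
  rw [mem_clopenAtom hT'] at h2
  refine hne (Finset.ext fun U => ?_)
  constructor
  · intro hU; exact (h2 U (hT hU)).1 ((h1 U (hT hU)).2 hU)
  · intro hU; exact (h1 U (hT' hU)).1 ((h2 U (hT' hU)).2 hU)

lemma eq_sup_clopenAtom {s : Finset (Clopens X)} {U : Clopens X} (hU : U ∈ s) :
    U = (s.powerset.filter (U ∈ ·)).sup (clopenAtom s) := by
  ext x
  simp only [SetLike.mem_coe, Clopens.mem_finset_sup, Finset.mem_filter, Finset.mem_powerset]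
  constructor
  · intro hx
    refine ⟨s.filter (x ∈ ·), ⟨Finset.filter_subset _ _, by simp [hU, hx]⟩, ?_⟩
    rw [mem_clopenAtom (Finset.filter_subset _ _)]
    intro V hV
    simp [hV]
  · rintro ⟨T, ⟨hTs, hUT⟩, hx⟩
    exact ((mem_clopenAtom hTs).1 hx U hU).2 hUT

end Clopens

section Main
open TopologicalSpace
variable {X : Type*} [TopologicalSpace X]

/-- Characteristic function of a clopen, as a locally constant `ℤ`-valued function. -/
noncomputable def chiInd (U : Clopens X) : LocallyConstant X ℤ :=
  LocallyConstant.charFn ℤ U.isClopen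

lemma chiInd_apply (U : Clopens X) (x : X) :
    chiInd U x = if x ∈ U then 1 else 0 := by
  rw [chiInd]
  change Set.indicator (U : Set X) 1 x = _
  simp [Set.indicator_apply, SetLike.mem_coe]

lemma chiInd_isValuation : IsValuation' (chiInd (X := X)) := by
  constructor
  · ext x
    simp [chiInd_apply, Clopens.not_mem_bot']
  · intro U V
    ext x
    show chiInd U x + chiInd V x = chiInd (U ⊔ V) x + chiInd (U ⊓ V) x
    simp only [chiInd_apply, Clopens.mem_sup', Clopens.mem_inf']
    by_cases hU : x ∈ U <;> by_cases hV : x ∈ V <;> simp [hU, hV]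

/-- Evaluation at a point as an additive homomorphism. -/
def evalHom (x : X) : LocallyConstant X ℤ →+ ℤ where
  toFun f := f x
  map_zero' := rfl
  map_add' _ _ := rfl

lemma motiveOf_isValuation {D : Type*} [DistribLattice D] [OrderBot D] :
    IsValuation' (motiveOf (D := D)) := by
  constructor
  · rw [motiveOf]
    change (QuotientAddGroup.mk _ : FreeAbelianGroup D ⧸ motiveRelators D) = 0
    rw [QuotientAddGroup.eq_zero_iff]
    exact AddSubgroup.subset_closure (Or.inl rfl)
  · intro U V
    rw [← sub_eq_zero]
    have : motiveOf U + motiveOf V - (motiveOf (U ⊔ V) + motiveOf (U ⊓ V)) =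
        QuotientAddGroup.mk (FreeAbelianGroup.of U + FreeAbelianGroup.of V
          - FreeAbelianGroup.of (U ⊔ V) - FreeAbelianGroup.of (U ⊓ V)) := by
      simp only [motiveOf, QuotientAddGroup.mk_add, QuotientAddGroup.mk_sub, sub_sub]
      rfl
    rw [this]
    change (QuotientAddGroup.mk _ : FreeAbelianGroup D ⧸ motiveRelators D) = 0
    rw [QuotientAddGroup.eq_zero_iff]
    exact AddSubgroup.subset_closure (Or.inr ⟨U, V, rfl⟩)

/-- Decomposition of a `ℤ`-linear combination of valuation values along the
atoms of the finite Boolean subalgebra generated by `s`. -/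
lemma valuation_sum_decomp {A : Type*} [AddCommGroup A] {μ : Clopens X → A}
    (hμ : IsValuation' μ) (s : Finset (Clopens X)) (c : Clopens X → ℤ) :
    ∑ U ∈ s, c U • μ U
      = ∑ T ∈ s.powerset, (∑ U ∈ T, c U) • μ (clopenAtom s T) := by
  have step1 : ∀ U ∈ s, μ U = ∑ T ∈ s.powerset.filter (U ∈ ·), μ (clopenAtom s T) := by
    intro U hU
    conv_lhs => rw [eq_sup_clopenAtom hU]
    apply hμ.finset_sup
    intro T hT T' hT' hne
    simp only [Finset.mem_filter, Finset.mem_powerset] at hT hT'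
    exact clopenAtom_disjoint hT.1 hT'.1 hne
  calc ∑ U ∈ s, c U • μ U
      = ∑ U ∈ s, ∑ T ∈ s.powerset.filter (U ∈ ·), c U • μ (clopenAtom s T) := by
        refine Finset.sum_congr rfl fun U hU => ?_
        rw [step1 U hU, Finset.smul_sum]
    _ = ∑ U ∈ s, ∑ T ∈ s.powerset, if U ∈ T then c U • μ (clopenAtom s T) else 0 := by
        refine Finset.sum_congr rfl fun U hU => ?_
        rw [Finset.sum_filter]
    _ = ∑ T ∈ s.powerset, ∑ U ∈ s, if U ∈ T then c U • μ (clopenAtom s T) else 0 :=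
        Finset.sum_comm
    _ = ∑ T ∈ s.powerset, (∑ U ∈ T, c U) • μ (clopenAtom s T) := by
        refine Finset.sum_congr rfl fun T hT => ?_
        rw [Finset.mem_powerset] at hT
        rw [← Finset.sum_filter, Finset.filter_mem_eq_inter,
          Finset.inter_eq_right.2 hT, ← Finset.sum_smul]

/-- The key injectivity lemma. -/
lemma key_lemma (s : Finset (Clopens X)) (c : Clopens X → ℤ)
    (h : ∑ U ∈ s, c U • chiInd U = 0) :
    ∑ U ∈ s, c U • (motiveOf U : Motive (Clopens X)) = 0 := by
  rw [valuation_sum_decomp chiInd_isValuation] at h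
  rw [valuation_sum_decomp motiveOf_isValuation]
  refine Finset.sum_eq_zero fun T hT => ?_
  rw [Finset.mem_powerset] at hT
  by_cases hA : clopenAtom s T = ⊥
  · rw [hA, motiveOf_isValuation.1, smul_zero]
  · have hne : ((clopenAtom s T : Clopens X) : Set X).Nonempty := by
      rw [Set.nonempty_iff_ne_empty]
      intro he
      exact hA (Clopens.ext (by rw [he, Clopens.coe_bot]))
    obtain ⟨x, hx⟩ := hne
    rw [SetLike.mem_coe] at hx
    have hval := congrArg (evalHom x) h
    rw [map_sum, map_zero] at hval
    have hsingle : ∀ T' ∈ s.powerset, T' ≠ T →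
        evalHom x ((∑ U ∈ T', c U) • chiInd (clopenAtom s T')) = 0 := by
      intro T' hT' hne'
      rw [Finset.mem_powerset] at hT'
      have hxT' : x ∉ clopenAtom s T' := by
        intro hx'
        have : x ∈ clopenAtom s T ⊓ clopenAtom s T' := ⟨hx, hx'⟩
        rw [clopenAtom_disjoint hT hT' (fun h' => hne' (h'.symm))] at this
        exact Clopens.not_mem_bot' this
      rw [map_zsmul]
      show (∑ U ∈ T', c U) • chiInd (clopenAtom s T') x = 0
      rw [chiInd_apply, if_neg hxT', smul_zero]
    rw [Finset.sum_eq_single T hsingle (fun h' => absurd (Finset.mem_powerset.2 hT) h')] at hval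
    rw [map_zsmul] at hval
    have : chiInd (clopenAtom s T) x = 1 := by rw [chiInd_apply, if_pos hx]
    rw [show evalHom x (chiInd (clopenAtom s T)) = 1 from this, smul_eq_mul, mul_one] at hval
    rw [hval, zero_smul]

end Main

section Assemble
open TopologicalSpace
variable (X : Type*) [TopologicalSpace X]

lemma chiInd_relators_le_ker :
    motiveRelators (Clopens X) ≤ (FreeAbelianGroup.lift (chiInd (X := X))).ker := by
  rw [motiveRelators]
  rw [AddSubgroup.closure_le]
  rintro y (hy | ⟨U, V, rfl⟩)
  · rw [Set.mem_singleton_iff] at hy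
    subst hy
    simp only [SetLike.mem_coe, AddMonoidHom.mem_ker, FreeAbelianGroup.lift_apply_of]
    exact chiInd_isValuation.1
  · simp only [SetLike.mem_coe, AddMonoidHom.mem_ker, map_sub, map_add,
      FreeAbelianGroup.lift_apply_of]
    rw [sub_sub, sub_eq_zero]
    exact chiInd_isValuation.2 U V

/-- The comparison homomorphism `M(B) → C(X, ℤ)`. -/
noncomputable def motiveToLC : Motive (Clopens X) →+ LocallyConstant X ℤ :=
  QuotientAddGroup.lift (motiveRelators (Clopens X)) (FreeAbelianGroup.lift chiInd)
    (chiInd_relators_le_ker X)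

lemma motiveToLC_motiveOf (U : Clopens X) : motiveToLC X (motiveOf U) = chiInd U := by
  show QuotientAddGroup.lift _ _ _ (QuotientAddGroup.mk _) = _
  rw [QuotientAddGroup.lift_mk, FreeAbelianGroup.lift_apply_of]

lemma motiveToLC_injective : Function.Injective (motiveToLC X) := by
  rw [injective_iff_map_eq_zero]
  intro m hm
  induction m using QuotientAddGroup.induction_on with
  | H a =>
  set g := FreeAbelianGroup.toFinsupp a with hg
  have hsum : a = ∑ U ∈ g.support, g U • FreeAbelianGroup.of U := by
    conv_lhs => rw [← Finsupp.toFreeAbelianGroup_toFinsupp a]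
    rw [← hg, Finsupp.toFreeAbelianGroup, Finsupp.liftAddHom_apply]
    rfl
  have hmk : (QuotientAddGroup.mk a : Motive (Clopens X))
      = ∑ U ∈ g.support, g U • motiveOf U := by
    rw [hsum]
    rw [show ((QuotientAddGroup.mk (∑ U ∈ g.support, g U • FreeAbelianGroup.of U) :
        Motive (Clopens X))) = QuotientAddGroup.mk' (motiveRelators (Clopens X))
        (∑ U ∈ g.support, g U • FreeAbelianGroup.of U) from rfl]
    rw [map_sum]
    refine Finset.sum_congr rfl fun U _ => ?_
    rw [map_zsmul]
    rfl
  have hφ : ∑ U ∈ g.support, g U • chiInd U = 0 := by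
    have : motiveToLC X (QuotientAddGroup.mk a) = ∑ U ∈ g.support, g U • chiInd U := by
      rw [hmk, map_sum]
      refine Finset.sum_congr rfl fun U _ => ?_
      rw [map_zsmul, motiveToLC_motiveOf]
    rw [← this]
    exact hm
  rw [hmk]
  exact key_lemma g.support g hφ

lemma motiveToLC_surjective [CompactSpace X] : Function.Surjective (motiveToLC X) := by
  intro f
  have hfin : (Set.range f).Finite := f.range_finite
  set t := hfin.toFinset with ht
  have hfib : ∀ n : ℤ, IsClopen (f ⁻¹' {n}) := fun n =>
    f.isLocallyConstant.isClopen_fiber n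
  refine ⟨∑ n ∈ t, n • motiveOf (⟨f ⁻¹' {n}, hfib n⟩ : Clopens X), ?_⟩
  ext x
  show evalHom x (motiveToLC X (∑ n ∈ t, n • motiveOf (⟨f ⁻¹' {n}, hfib n⟩ : Clopens X))) = f x
  rw [show evalHom x (motiveToLC X (∑ n ∈ t, n • motiveOf (⟨f ⁻¹' {n}, hfib n⟩ : Clopens X)))
      = ((evalHom x).comp (motiveToLC X)) (∑ n ∈ t, n • motiveOf (⟨f ⁻¹' {n}, hfib n⟩ :
        Clopens X)) from rfl, map_sum]
  have hterm : ∀ n : ℤ, ((evalHom x).comp (motiveToLC X))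
      (n • motiveOf (⟨f ⁻¹' {n}, hfib n⟩ : Clopens X))
      = n • chiInd (⟨f ⁻¹' {n}, hfib n⟩ : Clopens X) x := by
    intro n
    rw [map_zsmul, AddMonoidHom.comp_apply, motiveToLC_motiveOf]
    rfl
  rw [Finset.sum_eq_single (f x)]
  · rw [hterm, chiInd_apply,
      if_pos (show x ∈ (⟨f ⁻¹' {f x}, hfib (f x)⟩ : Clopens X) from rfl)]
    simp
  · intro n hn hne
    rw [hterm, chiInd_apply,
      if_neg (show x ∉ (⟨f ⁻¹' {n}, hfib n⟩ : Clopens X) from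
        fun hx => hne (show f x = n from hx).symm), smul_zero]
  · intro hfx
    exact absurd (hfin.mem_toFinset.2 ⟨x, rfl⟩) hfx

end Assemble

/-- For a profinite space `X`, the module of motives of its Boolean algebra of
clopen subsets is a free abelian group. -/
theorem motive_clopens_profinite_free (X : Type*) [TopologicalSpace X]
    [CompactSpace X] [T2Space X] [TotallyDisconnectedSpace X] :
    Module.Free ℤ (Motive (TopologicalSpace.Clopens X)) := by
  have hfree : Module.Free ℤ (LocallyConstant X ℤ) :=
    LocallyConstant.freeOfProfinite (Profinite.of X)
  let e : Motive (TopologicalSpace.Clopens X) ≃+ LocallyConstant X ℤ :=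
    AddEquiv.ofBijective (motiveToLC X) ⟨motiveToLC_injective X, motiveToLC_surjective X⟩
  exact Module.Free.of_equiv e.symm.toIntLinearEquiv
end

section
/- Let D be a lower bounded distributive lattice and D_∞ the bounded distributive lattice obtained by freely adjoining a top element ∞. Then M(D_∞) ≅ M(D) ⊕ Z, with the splitting induced by the lattice maps D → D_∞, the retraction pair 2 → D_∞ and D_∞ → 2 (sending every element other than ∞ to 0 and ∞ to 1). -/
open scoped Classical

section Aux
variable {D : Type*} [DistribLattice D] [OrderBot D] {A : Type*} [AddCommGroup A]

lemma motiveOf_bot : motiveOf (⊥ : D) = 0 := by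
  exact (QuotientAddGroup.eq_zero_iff _).2
    (AddSubgroup.subset_closure (Or.inl rfl))

noncomputable def motiveLift (μ : D → A) (h : IsValuation μ) : Motive D →+ A :=
  QuotientAddGroup.lift (motiveRelators D) (FreeAbelianGroup.lift μ) (by
    intro x hx
    have hle : motiveRelators D ≤ (FreeAbelianGroup.lift μ).ker := by
      rw [motiveRelators, AddSubgroup.closure_le]
      rintro y hy
      simp only [Set.mem_union, Set.mem_singleton_iff, Set.mem_setOf_eq] at hy
      rcases hy with rfl | ⟨U, V, rfl⟩
      · refine AddMonoidHom.mem_ker.2 ?_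
        rw [FreeAbelianGroup.lift_apply_of]
        exact h.1
      · refine AddMonoidHom.mem_ker.2 ?_
        rw [map_sub, map_sub, map_add, FreeAbelianGroup.lift_apply_of,
          FreeAbelianGroup.lift_apply_of, FreeAbelianGroup.lift_apply_of, FreeAbelianGroup.lift_apply_of,
          sub_sub, sub_eq_zero, h.2 U V]
    exact hle hx)

@[simp] lemma motiveLift_of (μ : D → A) (h : IsValuation μ) (U : D) :
    motiveLift μ h (motiveOf U) = μ U := by
  show QuotientAddGroup.lift _ _ _ (QuotientAddGroup.mk _) = _
  rw [QuotientAddGroup.lift_mk, FreeAbelianGroup.lift_apply_of]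

lemma motive_hom_ext {φ ψ : Motive D →+ A}
    (h : ∀ U, φ (motiveOf U) = ψ (motiveOf U)) : φ = ψ :=
  QuotientAddGroup.addMonoidHom_ext _ (FreeAbelianGroup.lift_ext _ _ fun U => h U)
end Aux

section Aux2
variable {D : Type*} [DistribLattice D] [OrderBot D]

lemma motive_sup_inf (U V : D) :
    motiveOf U + motiveOf V = motiveOf (U ⊔ V) + motiveOf (U ⊓ V) := by
  have h : ((QuotientAddGroup.mk' (motiveRelators D))
      (FreeAbelianGroup.of U + FreeAbelianGroup.of V
        - FreeAbelianGroup.of (U ⊔ V) - FreeAbelianGroup.of (U ⊓ V)) : Motive D) = 0 :=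
    (QuotientAddGroup.eq_zero_iff _).2
      (AddSubgroup.subset_closure (Or.inr ⟨U, V, rfl⟩))
  rw [map_sub, map_sub, map_add] at h
  have h2 : motiveOf U + motiveOf V - motiveOf (U ⊔ V) - motiveOf (U ⊓ V) = 0 := h
  rw [sub_sub, sub_eq_zero] at h2
  exact h2

lemma isValuation_coe :
    IsValuation (fun U : D => motiveOf ((U : WithTop D))) := by
  constructor
  · show motiveOf ((⊥ : D) : WithTop D) = 0
    rw [WithTop.coe_bot, motiveOf_bot]
  · intro U V
    have := motive_sup_inf (U : WithTop D) (V : WithTop D)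
    simpa [← WithTop.coe_sup, ← WithTop.coe_inf] using this

noncomputable def muInf : WithTop D → Motive D × ℤ :=
  fun x => WithTop.recTopCoe (0, 1) (fun u => (motiveOf u, 0)) x

lemma isValuation_muInf : IsValuation (muInf (D := D)) := by
  constructor
  · have hb : (⊥ : WithTop D) = ((⊥ : D) : WithTop D) := rfl
    show muInf (⊥ : WithTop D) = 0
    rw [hb]
    show ((motiveOf (⊥ : D), (0 : ℤ)) : Motive D × ℤ) = 0
    rw [motiveOf_bot]
    rfl
  · intro U V
    induction U using WithTop.recTopCoe with
    | top =>
      induction V using WithTop.recTopCoe with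
      | top => simp [muInf]
      | coe v => simp [muInf]
    | coe u =>
      induction V using WithTop.recTopCoe with
      | top => simp [muInf, add_comm]
      | coe v =>
        simp only [muInf, WithTop.recTopCoe_coe, ← WithTop.coe_sup, ← WithTop.coe_inf,
          Prod.mk_add_mk, Prod.mk.injEq]
        exact ⟨motive_sup_inf u v, trivial⟩
end Aux2


/-- For a lower bounded distributive lattice `D`, with `D_∞ = WithTop D` obtained by
freely adjoining a top element, `M(D_∞) ≅ M(D) ⊕ ℤ`, the splitting being induced by
the inclusion `D → D_∞` and the section sending the generator of `ℤ` to `[∞]`. -/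
theorem motive_withTop_split (D : Type*) [DistribLattice D] [OrderBot D] :
    ∃ e : Motive D × ℤ ≃+ Motive (WithTop D),
      (∀ U : D, e (motiveOf U, 0) = motiveOf (U : WithTop D)) ∧
        e (0, 1) = motiveOf (⊤ : WithTop D) := by
  classical
  set f1 : Motive D →+ Motive (WithTop D) := motiveLift _ (isValuation_coe (D := D)) with hf1
  set f : Motive D × ℤ →+ Motive (WithTop D) :=
    f1.coprod ((zmultiplesHom _) (motiveOf (⊤ : WithTop D))) with hf
  set g : Motive (WithTop D) →+ Motive D × ℤ :=
    motiveLift _ (isValuation_muInf (D := D)) with hg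
  have hfa : ∀ (a : Motive D) (n : ℤ), f (a, n) = f1 a + n • motiveOf (⊤ : WithTop D) := by
    intro a n; simp [hf]
  have hfU : ∀ U : D, f (motiveOf U, 0) = motiveOf (U : WithTop D) := by
    intro U; rw [hfa]; simp [hf1]
  have hftop : f (0, 1) = motiveOf (⊤ : WithTop D) := by
    rw [hfa]; simp
  have hgU : ∀ x : WithTop D, g (motiveOf x) = muInf x := by
    intro x; simp [hg]
  have h2 : f.comp g = AddMonoidHom.id _ := by
    apply motive_hom_ext
    intro x
    induction x using WithTop.recTopCoe with
    | top =>
      simp only [AddMonoidHom.comp_apply, AddMonoidHom.id_apply, hgU]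
      show f ((0 : Motive D), (1 : ℤ)) = motiveOf (⊤ : WithTop D)
      exact hftop
    | coe u =>
      simp only [AddMonoidHom.comp_apply, AddMonoidHom.id_apply, hgU]
      show f ((motiveOf u, (0 : ℤ))) = motiveOf (u : WithTop D)
      exact hfU u
  have h1 : g.comp f = AddMonoidHom.id _ := by
    have hA : (g.comp f).comp (AddMonoidHom.inl (Motive D) ℤ)
        = AddMonoidHom.inl (Motive D) ℤ := by
      apply motive_hom_ext
      intro U
      simp only [AddMonoidHom.comp_apply, AddMonoidHom.inl_apply]
      rw [hfU, hgU]
      rfl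
    have hB : g (f (0, 1)) = (0, 1) := by
      rw [hftop, hgU]; rfl
    apply AddMonoidHom.ext
    rintro ⟨a, n⟩
    have hsplit : ((a, n) : Motive D × ℤ) = (a, 0) + n • ((0 : Motive D), (1 : ℤ)) := by
      simp [Prod.ext_iff]
    rw [AddMonoidHom.comp_apply, AddMonoidHom.id_apply, hsplit, map_add, map_add, map_zsmul,
      map_zsmul]
    have := DFunLike.congr_fun hA a
    simp only [AddMonoidHom.comp_apply, AddMonoidHom.inl_apply] at this
    rw [this, hB]
  refine ⟨AddMonoidHom.toAddEquiv f g h1 h2, ?_, ?_⟩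
  · intro U
    show f (motiveOf U, 0) = _
    exact hfU U
  · show f (0, 1) = _
    exact hftop
end
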